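/- Suppose Assumption 1 holds, f ∈ S⁰_{μ_f}(X) and g ∈ S⁰_{μ_g}(Y) with μ_f, μ_g ≥ 0, β_k → ∞, (ε_k) is nonincreasing with ε_k ≥ 0 and Σ_{k=1}^{∞} α_kβ_kε_k < +∞, and let (x_k, y_k, λ_k) be generated by the scheme (disc) with the implicit multiplier choice λ̄_{k+1} = λ̂_{k+1} = λ_{k+1} (Algorithm 1). Let (x*,y*,λ*) be a saddle point of L. Then there exists C > 0 such that μ_f‖x_k − x*‖² + μ_g‖y_k − y*‖² ≤ C/β_k for all k ≥ 1; moreover μ_f β_k‖x_{k+1} − x_k‖² → 0 and μ_g β_k‖y_{k+1} − y_k‖² → 0 as k → ∞. -/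

import Mathlib

open Filter Topology
open scoped RealInnerProductSpace

lemma half_sq {X : Type*} [NormedAddCommGroup X] [InnerProductSpace ℝ X]
    (a b c : X) :
    ⟪a - b, a - c⟫ = 1/2*‖a - c‖^2 - 1/2*‖b - c‖^2 + 1/2*‖a - b‖^2 := by
  have h1 : a - b = (a - c) - (b - c) := by abel
  have h2 := norm_sub_sq_real (a - c) (b - c)
  rw [h1, inner_sub_left, real_inner_self_eq_norm_sq, real_inner_comm, ← h1]
  rw [← h1] at h2
  linarith

set_option maxHeartbeats 4000000 in
lemma block_est {X : Type*} [NormedAddCommGroup X] [InnerProductSpace ℝ X]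
    (a β βp δ γ μ ε εp : ℝ) (ha : 0 < a) (hβ : 0 < β) (hδ : 0 < δ)
    (hδγ : δ * γ - 1 ≥ 0) (hμ : 0 ≤ μ) (hε : 0 ≤ ε) (hεp : 0 ≤ εp)
    (hββ' : δ * βp ≤ δ * β + a * β) (hεm : εp ≤ ε)
    (x xp xs z zp u d : X) (F Fp Fs : ℝ)
    (hzp : zp = (1/a) • (xp - x) + γ • xp)
    (hstp : (1/a) • (zp - z) =
      -(β • (u + d + ε • xp - μ • (xp - (δ • zp + (1 - δ*γ) • xp)))))
    (h1 : Fp - F + μ/2 * ‖xp - x‖^2 ≤ ⟪u, xp - x⟫)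
    (h2 : Fp - Fs + μ/2 * ‖xp - xs‖^2 ≤ ⟪u, xp - xs⟫) :
    1/2*‖(δ • zp + (1 - δ*γ) • xp) - xs‖^2
      + ((δ*γ-1) + δ^2*βp*(μ+εp))/2 * ‖xp - xs‖^2
    ≤ 1/2*‖(δ • z + (1 - δ*γ) • x) - xs‖^2
      + ((δ*γ-1) + δ^2*β*(μ+ε))/2 * ‖x - xs‖^2
      - a*β*δ*⟪d, (δ • zp + (1 - δ*γ) • xp) - xs⟫
      - β*δ^2*(Fp - F) - a*β*δ*(Fp - Fs)
      - β*δ^2*(μ+ε)/2 * ‖xp - x‖^2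
      + a*β*ε*(δ^2/2)*‖xs‖^2
      + a*β*ε*(1/2)*‖(δ • zp + (1 - δ*γ) • xp) - xs‖^2 := by
  have ha' : a ≠ 0 := ne_of_gt ha
  set P : X := δ • zp + (1 - δ*γ) • xp with hP
  set Q : X := δ • z + (1 - δ*γ) • x with hQ
  set p : X := P - xs with hp
  set q : X := Q - xs with hq
  set w : X := xp - x with hw
  set s : X := xp - xs with hs
  set s0 : X := x - xs with hs0
  have hτ : p = (δ/a) • w + s := by
    rw [hp, hP, hzp, hw, hs]
    match_scalars <;> field_simp <;> ring
  have hxpP : xp - P = -((δ/a) • w) := by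
    rw [hP, hzp, hw]
    match_scalars <;> field_simp <;> ring
  have hz3 : zp - z = (-(a*β)) • (u + d + ε • xp - μ • (xp - P)) := by
    have := congrArg (fun t : X => a • t) hstp
    simp only [smul_smul] at this
    rw [mul_one_div, div_self ha', one_smul] at this
    rw [this]
    match_scalars <;> ring
  have hpq : p - q = (-(a*β*δ)) • u + (-(a*β*δ)) • d + (-(a*β*δ*ε)) • xp
      + (1 - δ*γ - β*δ^2*μ) • w := by
    have e1 : p - q = δ • (zp - z) + (1 - δ*γ) • w := by
      rw [hp, hq, hP, hQ, hw]; module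
    rw [e1, hz3, hxpP]
    match_scalars <;> field_simp <;> ring
  have key : ⟪p - q, p⟫ = -(a*β*δ)*⟪u, p⟫ - (a*β*δ)*⟪d, p⟫
      - (a*β*δ*ε)*⟪xp, p⟫ + (1 - δ*γ - β*δ^2*μ)*⟪w, p⟫ := by
    rw [hpq]
    simp only [inner_add_left, real_inner_smul_left]
    ring
  have hτ' : a • p = δ • w + a • s := by
    rw [hp, hP, hzp, hw, hs]
    match_scalars <;> field_simp <;> ring
  have hup' : a*⟪u, p⟫ = δ*⟪u, w⟫ + a*⟪u, s⟫ := by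
    have := congrArg (fun t : X => ⟪u, t⟫) hτ'
    simpa [inner_add_right, real_inner_smul_right] using this
  have hws : ⟪w, s⟫ = 1/2*‖s‖^2 - 1/2*‖s0‖^2 + 1/2*‖w‖^2 := by
    rw [hw, hs, hs0]; exact half_sq xp x xs
  have hwp' : a*⟪w, p⟫ = δ*‖w‖^2 + a*⟪w, s⟫ := by
    have := congrArg (fun t : X => ⟪w, t⟫) hτ'
    simpa [inner_add_right, real_inner_smul_right, real_inner_self_eq_norm_sq] using this
  have hsp' : a*⟪s, p⟫ = δ*⟪w, s⟫ + a*‖s‖^2 := by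
    have := congrArg (fun t : X => ⟪s, t⟫) hτ'
    simpa [inner_add_right, real_inner_smul_right, real_inner_self_eq_norm_sq,
      real_inner_comm s w] using this
  have hxpp : ⟪xp, p⟫ = ⟪s, p⟫ + ⟪xs, p⟫ := by
    have hxps : xp = s + xs := by rw [hs]; abel
    nth_rewrite 1 [hxps]
    rw [inner_add_left]
  have hxs : -(δ*⟪xs, p⟫) ≤ δ^2/2*‖xs‖^2 + 1/2*‖p‖^2 := by
    have h := abs_real_inner_le_norm xs p
    have h2 := neg_abs_le (⟪xs, p⟫)
    nlinarith [sq_nonneg (δ*‖xs‖ - ‖p‖), norm_nonneg xs, norm_nonneg p,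
      mul_nonneg (norm_nonneg xs) (norm_nonneg p)]
  have hhalf : 1/2*‖p‖^2 - 1/2*‖q‖^2 = ⟪p - q, p⟫ - 1/2*‖p - q‖^2 := by
    have := half_sq p q (0 : X)
    simp only [sub_zero] at this
    linarith
  have hβδ2 : (0:ℝ) ≤ β*δ^2 := by positivity
  have haβδ : (0:ℝ) ≤ a*β*δ := by positivity
  have haβε : (0:ℝ) ≤ a*β*ε := by positivity
  -- mu
  have m1 := mul_le_mul_of_nonneg_left h1 hβδ2
  have m2 := mul_le_mul_of_nonneg_left h2 haβδ
  have e1 : β*δ*(a*⟪u, p⟫) = β*δ*(δ*⟪u, w⟫ + a*⟪u, s⟫) := by rw [hup']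
  have mu : -(a*β*δ*⟪u, p⟫) ≤ -(β*δ^2*(Fp - F)) - a*β*δ*(Fp - Fs)
      - β*δ^2*(μ/2)*‖w‖^2 - a*β*δ*(μ/2)*‖s‖^2 := by
    ring_nf at e1 m1 m2 ⊢
    linarith only [e1, m1, m2]
  -- mx
  have hxpp' : a*⟪xp, p⟫ = δ*⟪w, s⟫ + a*‖s‖^2 + a*⟪xs, p⟫ := by
    rw [hxpp, mul_add, hsp']
  have m3 := mul_le_mul_of_nonneg_left hxs haβε
  have m4 : β*δ^2*ε*⟪w, s⟫ = β*δ^2*ε*(1/2*‖s‖^2 - 1/2*‖s0‖^2 + 1/2*‖w‖^2) := by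
    rw [hws]
  have e2 : β*δ*ε*(a*⟪xp, p⟫) = β*δ*ε*(δ*⟪w, s⟫ + a*‖s‖^2 + a*⟪xs, p⟫) := by
    rw [hxpp']
  have mx : -(a*β*δ*ε*⟪xp, p⟫) ≤ -(β*δ^2*ε*(1/2*‖s‖^2 - 1/2*‖s0‖^2 + 1/2*‖w‖^2))
      - a*β*δ*ε*‖s‖^2 + a*β*ε*(δ^2/2)*‖xs‖^2 + a*β*ε*(1/2)*‖p‖^2 := by
    ring_nf at e2 m3 m4 ⊢
    linarith only [e2, m3, m4]
  -- mw
  have hneg : (1 - δ*γ - β*δ^2*μ) ≤ 0 := by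
    linarith only [hδγ, mul_nonneg hβδ2 hμ]
  have h6 : ⟪w, s⟫ ≤ ⟪w, p⟫ := by
    refine le_of_mul_le_mul_left ?_ ha
    linarith only [hwp', mul_nonneg hδ.le (sq_nonneg ‖w‖)]
  have m5 := mul_le_mul_of_nonpos_left h6 hneg
  have e6 : (1 - δ*γ - β*δ^2*μ)*⟪w, s⟫
      = (1 - δ*γ - β*δ^2*μ)*(1/2*‖s‖^2 - 1/2*‖s0‖^2) + (1 - δ*γ - β*δ^2*μ)*(1/2*‖w‖^2) := by
    rw [hws]; ring
  have e7 : (0:ℝ) ≤ -(1 - δ*γ - β*δ^2*μ)*(1/2*‖w‖^2) :=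
    mul_nonneg (by linarith) (by positivity)
  have mw : (1 - δ*γ - β*δ^2*μ)*⟪w, p⟫ ≤ (1 - δ*γ - β*δ^2*μ)*(1/2*‖s‖^2 - 1/2*‖s0‖^2) := by
    linarith only [m5, e6, e7]
  -- coefficient comparison
  have coef : ((δ*γ-1) + δ^2*βp*(μ+εp))/2 * ‖s‖^2
      ≤ ((δ*γ-1) + δ^2*β*(μ+ε))/2 * ‖s‖^2 + (a*β*δ*(μ/2) + a*β*δ*ε)*‖s‖^2 := by
    have h3 : δ^2*βp*μ ≤ δ^2*β*μ + a*β*δ*μ := by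
      nlinarith [mul_le_mul_of_nonneg_right hββ' hμ, mul_nonneg hδ.le hμ]
    have h4 : δ^2*βp*εp ≤ δ^2*β*ε + a*β*δ*ε := by
      nlinarith [mul_le_mul_of_nonneg_right hββ' hεp,
        mul_nonneg (by positivity : (0:ℝ) ≤ δ*β + a*β) (sub_nonneg.2 hεm)]
    linarith only [mul_le_mul_of_nonneg_right (add_le_add h3 h4) (sq_nonneg ‖s‖),
      mul_nonneg (mul_nonneg haβδ hε) (sq_nonneg ‖s‖)]
  have hpq2 : (0:ℝ) ≤ 1/2*‖p - q‖^2 := by positivity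
  linarith only [key, hhalf, mu, mx, mw, coef, hpq2]

lemma gronwall_est (E θ D : ℕ → ℝ) (c0 : ℝ) (hc0 : 0 ≤ c0)
    (hE : ∀ k, 0 ≤ E k) (hθ : ∀ k, 0 ≤ θ k) (hD : ∀ k, 0 ≤ D k)
    (hsum : Summable θ)
    (hstep : ∀ k, E (k+1) ≤ E k + θ k * (c0 + E (k+1)) - D k) :
    (∃ M : ℝ, ∀ k, E k ≤ M) ∧ Tendsto D atTop (𝓝 0) := by
  have hθ0 : Tendsto θ atTop (𝓝 0) := hsum.tendsto_atTop_zero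
  obtain ⟨K, hK⟩ := (hθ0.eventually (eventually_le_nhds (by norm_num : (0:ℝ) < 1/2))).exists_forall_of_atTop
  set F : ℕ → ℝ := fun k => E k + c0 with hF
  have hFnn : ∀ k, 0 ≤ F k := fun k => add_nonneg (hE k) hc0
  have hFstep : ∀ k, K ≤ k → F (k+1) ≤ F k * (1 + 2 * θ k) := by
    intro k hk
    have h1 := hstep k
    have h2 := hK k hk
    have h3 := hθ k
    have h4 := hE (k+1)
    have h5 := hE k
    have h6 := hD k
    simp only [hF]
    nlinarith [mul_nonneg (mul_nonneg h3 (by linarith : (0:ℝ) ≤ 1 - 2*θ k)) (add_nonneg h5 hc0)]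
  set S : ℝ := ∑' k, θ k with hS
  have hpart : ∀ n K', ∑ j ∈ Finset.range n, θ (K' + j) ≤ S := by
    intro n K'
    have h1 : ∑ j ∈ Finset.range n, θ (K' + j) = ∑ j ∈ (Finset.range n).image (fun j => K' + j), θ j := by
      rw [Finset.sum_image]
      intro a _ b _ h; exact Nat.add_left_cancel h
    rw [h1]
    exact hsum.sum_le_tsum _ (fun i _ => hθ i)
  have hSnn : 0 ≤ S := tsum_nonneg hθ
  have hbound : ∀ n, F (K + n) ≤ F K * Real.exp (2 * ∑ j ∈ Finset.range n, θ (K + j)) := by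
    intro n
    induction n with
    | zero => simp
    | succ n ih =>
      have h1 : F (K + (n+1)) = F ((K + n) + 1) := by ring_nf
      have h2 := hFstep (K + n) (by omega)
      have h3 : (1 + 2 * θ (K + n)) ≤ Real.exp (2 * θ (K + n)) := by
        have := Real.add_one_le_exp (2 * θ (K + n)); linarith
      have h4 : F (K + n) * (1 + 2 * θ (K + n)) ≤ (F K * Real.exp (2 * ∑ j ∈ Finset.range n, θ (K + j))) * Real.exp (2 * θ (K + n)) := by
        apply mul_le_mul ih h3 (by linarith [hθ (K+n)]) (mul_nonneg (hFnn K) (Real.exp_pos _).le)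
      rw [h1]
      calc F ((K + n) + 1) ≤ F (K + n) * (1 + 2 * θ (K + n)) := h2
        _ ≤ (F K * Real.exp (2 * ∑ j ∈ Finset.range n, θ (K + j))) * Real.exp (2 * θ (K + n)) := h4
        _ = F K * Real.exp (2 * ∑ j ∈ Finset.range (n+1), θ (K + j)) := by
            have he : 2 * ∑ j ∈ Finset.range (n+1), θ (K + j)
                = 2 * ∑ j ∈ Finset.range n, θ (K + j) + 2 * θ (K + n) := by
              rw [Finset.sum_range_succ]; ring
            rw [he, Real.exp_add, ← mul_assoc]
  have hM0 : ∀ n, F (K + n) ≤ F K * Real.exp (2 * S) := by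
    intro n
    refine le_trans (hbound n) ?_
    have := hpart n K
    have h2 : Real.exp (2 * ∑ j ∈ Finset.range n, θ (K + j)) ≤ Real.exp (2 * S) :=
      Real.exp_le_exp.2 (by linarith)
    exact mul_le_mul_of_nonneg_left h2 (hFnn K)
  set M : ℝ := F K * Real.exp (2 * S) + ∑ j ∈ Finset.range (K+1), E j with hM
  have hMb : ∀ k, E k ≤ M := by
    intro k
    have hsumnn : 0 ≤ ∑ j ∈ Finset.range (K+1), E j := Finset.sum_nonneg (fun j _ => hE j)
    rcases le_or_gt K k with h | h
    · obtain ⟨n, rfl⟩ : ∃ n, k = K + n := ⟨k - K, by omega⟩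
      have := hM0 n
      simp only [hF] at this
      simp only [hM, hF]
      linarith
    · have h1 : E k ≤ ∑ j ∈ Finset.range (K+1), E j :=
        Finset.single_le_sum (fun j _ => hE j) (Finset.mem_range.2 (by omega))
      have h2 : 0 ≤ (E K + c0) * Real.exp (2 * S) :=
        mul_nonneg (add_nonneg (hE K) hc0) (Real.exp_pos _).le
      simp only [hM, hF]; linarith
  refine ⟨⟨M, hMb⟩, ?_⟩
  have hDb : ∀ k, K ≤ k → D k ≤ E k - E (k+1) + θ k * (M + c0) := by
    intro k hk
    have h1 := hstep k
    have h2 := hMb (k+1)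
    have h3 := hθ k
    nlinarith
  have hDsum : Summable (fun n => D (n + K)) := by
    apply summable_of_sum_range_le (c := E K + (M + c0) * S) (fun n => hD (n + K))
    intro n
    have h1 : ∑ i ∈ Finset.range n, D (i + K) ≤
        ∑ i ∈ Finset.range n, (E (K + i) - E (K + i + 1) + θ (K + i) * (M + c0)) := by
      apply Finset.sum_le_sum
      intro i _
      have := hDb (K + i) (by omega)
      have he : i + K = K + i := by omega
      rw [he]
      linarith
    have h2 : ∑ i ∈ Finset.range n, (E (K + i) - E (K + i + 1) + θ (K + i) * (M + c0))
        = (E K - E (K + n)) + (∑ i ∈ Finset.range n, θ (K + i)) * (M + c0) := by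
      rw [Finset.sum_add_distrib, ← Finset.sum_mul]
      congr 1
      have := Finset.sum_range_sub' (fun i => E (K + i)) n
      simpa [add_assoc] using this
    have h3 : (0:ℝ) ≤ M + c0 := by
      linarith [hMb 0, hE 0]
    have h4 : (∑ i ∈ Finset.range n, θ (K + i)) * (M + c0) ≤ S * (M + c0) :=
      mul_le_mul_of_nonneg_right (hpart n K) h3
    have h5 := hE (K + n)
    calc ∑ i ∈ Finset.range n, D (i + K) ≤ _ := h1
      _ = (E K - E (K + n)) + (∑ i ∈ Finset.range n, θ (K + i)) * (M + c0) := h2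
      _ ≤ E K + (M + c0) * S := by linarith [mul_comm S (M + c0) ▸ h4]
  have := hDsum.tendsto_atTop_zero
  rwa [tendsto_add_atTop_iff_nat K] at this

set_option maxHeartbeats 4000000 in
theorem trajectory_rates_strongly_convex
    {X Y Z : Type*}
    [NormedAddCommGroup X] [InnerProductSpace ℝ X] [CompleteSpace X]
    [NormedAddCommGroup Y] [InnerProductSpace ℝ Y] [CompleteSpace Y]
    [NormedAddCommGroup Z] [InnerProductSpace ℝ Z] [CompleteSpace Z]
    (f : X → ℝ) (g : Y → ℝ)
    (hfconv : ConvexOn ℝ Set.univ f) (hfcont : Continuous f)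
    (hgconv : ConvexOn ℝ Set.univ g) (hgcont : Continuous g)
    (A : X →L[ℝ] Z) (B : Y →L[ℝ] Z) (b : Z)
    (μf μg : ℝ) (hμf : 0 ≤ μf) (hμg : 0 ≤ μg)
    (hfS : ∀ x u v : X, (∀ w, f w - f x ≥ ⟪v, w - x⟫) →
        f u - f x - ⟪v, u - x⟫ ≥ μf / 2 * ‖u - x‖ ^ 2)
    (hgS : ∀ y u v : Y, (∀ w, g w - g y ≥ ⟪v, w - y⟫) →
        g u - g y - ⟪v, u - y⟫ ≥ μg / 2 * ‖u - y‖ ^ 2)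
    (L : X → Y → Z → ℝ)
    (hL : ∀ x y l, L x y l = f x + g y + ⟪l, A x + B y - b⟫)
    (δ γ : ℝ) (hδ : 0 < δ) (hγ : 0 < γ)
    (α β ε : ℕ → ℝ)
    (hα : ∀ k, 1 ≤ k → 0 < α k)
    (hβpos : ∀ k, 1 ≤ k → 0 < β k)
    (hβmono : ∀ k, 1 ≤ k → β k ≤ β (k + 1))
    (hεnn : ∀ k, 1 ≤ k → 0 ≤ ε k)
    (hβtop : Tendsto β atTop atTop)
    (x : ℕ → X) (y : ℕ → Y) (lam : ℕ → Z)
    (Zs Zd : ℕ → X) (Hs Hd : ℕ → Y)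
    (hZ : ∀ k, 1 ≤ k → Zs (k + 1) = (1 / α k) • (x (k + 1) - x k) + γ • x (k + 1))
    (hZd : ∀ k, 1 ≤ k → Zd (k + 1) = δ • Zs (k + 1) + (1 - δ * γ) • x (k + 1))
    (hH : ∀ k, 1 ≤ k → Hs (k + 1) = (1 / α k) • (y (k + 1) - y k) + γ • y (k + 1))
    (hHd : ∀ k, 1 ≤ k → Hd (k + 1) = δ • Hs (k + 1) + (1 - δ * γ) • y (k + 1))
    (hlam : ∀ k, 1 ≤ k → lam (k + 1) = lam k + (α k * β k) • (A (Zd (k + 1)) + B (Hd (k + 1)) - b))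
    (hstep : ∀ k, 1 ≤ k → ∃ u v,
        (∀ w, f w - f (x (k + 1)) ≥ ⟪u, w - x (k + 1)⟫) ∧
        (∀ w, g w - g (y (k + 1)) ≥ ⟪v, w - y (k + 1)⟫) ∧
        (1 / α k) • (Zs (k + 1) - Zs k) =
          -(β k • (u + (ContinuousLinearMap.adjoint A) (lam (k + 1)) + ε k • x (k + 1)
              - μf • (x (k + 1) - Zd (k + 1)))) ∧
        (1 / α k) • (Hs (k + 1) - Hs k) =
          -(β k • (v + (ContinuousLinearMap.adjoint B) (lam (k + 1)) + ε k • y (k + 1)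
              - μg • (y (k + 1) - Hd (k + 1)))))
    (hδγ : δ * γ - 1 ≥ 0)
    (hββ : ∀ k, 1 ≤ k → δ * β (k + 1) ≤ δ * β k + α k * β k)
    (hεmono : ∀ k, 1 ≤ k → ε (k + 1) ≤ ε k)
    (hsum : Summable (fun k => α k * β k * ε k))
    (xs : X) (ys : Y) (ls : Z)
    (hsaddle : ∀ x' y' l', L xs ys l' ≤ L xs ys ls ∧ L xs ys ls ≤ L x' y' ls)
    :
    (∃ C : ℝ, 0 < C ∧ ∀ k, 1 ≤ k →
        μf * ‖x k - xs‖ ^ 2 + μg * ‖y k - ys‖ ^ 2 ≤ C / β k) ∧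
    Tendsto (fun k => μf * β k * ‖x (k + 1) - x k‖ ^ 2) atTop (𝓝 0) ∧
    Tendsto (fun k => μg * β k * ‖y (k + 1) - y k‖ ^ 2) atTop (𝓝 0) := by
  -- saddle point consequences
  have hb : A xs + B ys = b := by
    have h1 := (hsaddle xs ys (ls + (A xs + B ys - b))).1
    rw [hL, hL] at h1
    rw [inner_add_left] at h1
    have h3 : ⟪A xs + B ys - b, A xs + B ys - b⟫ ≤ 0 := by linarith
    have h4 : A xs + B ys - b = 0 := by
      have h5 := real_inner_self_nonneg (x := A xs + B ys - b)
      exact inner_self_eq_zero.mp (le_antisymm h3 h5)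
    rwa [sub_eq_zero] at h4
  have hmin : ∀ (x' : X) (y' : Y),
      (f xs + ⟪ls, A xs⟫) + (g ys + ⟪ls, B ys⟫) ≤ (f x' + ⟪ls, A x'⟫) + (g y' + ⟪ls, B y'⟫) := by
    intro x' y'
    have h := (hsaddle x' y' ls).2
    rw [hL, hL] at h
    have hlsb : ⟪ls, A xs⟫ + ⟪ls, B ys⟫ = ⟪ls, b⟫ := by rw [← hb, inner_add_right]
    simp only [inner_sub_right, inner_add_right] at h
    linarith
  have hWx : ∀ x' : X, μf/2 * ‖x' - xs‖^2 ≤ (f x' + ⟪ls, A x'⟫) - (f xs + ⟪ls, A xs⟫) := by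
    intro x'
    have hv : ∀ w, f w - f xs ≥ ⟪-((ContinuousLinearMap.adjoint A) ls), w - xs⟫ := by
      intro w
      have h := hmin w ys
      have e : ⟪-((ContinuousLinearMap.adjoint A) ls), w - xs⟫
          = -(⟪ls, A w⟫ - ⟪ls, A xs⟫) := by
        rw [inner_neg_left, ContinuousLinearMap.adjoint_inner_left, map_sub, inner_sub_right]
      rw [e]; linarith
    have h := hfS xs x' (-((ContinuousLinearMap.adjoint A) ls)) hv
    have e : ⟪-((ContinuousLinearMap.adjoint A) ls), x' - xs⟫
        = -(⟪ls, A x'⟫ - ⟪ls, A xs⟫) := by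
      rw [inner_neg_left, ContinuousLinearMap.adjoint_inner_left, map_sub, inner_sub_right]
    rw [e] at h
    linarith
  have hWy : ∀ y' : Y, μg/2 * ‖y' - ys‖^2 ≤ (g y' + ⟪ls, B y'⟫) - (g ys + ⟪ls, B ys⟫) := by
    intro y'
    have hv : ∀ w, g w - g ys ≥ ⟪-((ContinuousLinearMap.adjoint B) ls), w - ys⟫ := by
      intro w
      have h := hmin xs w
      have e : ⟪-((ContinuousLinearMap.adjoint B) ls), w - ys⟫
          = -(⟪ls, B w⟫ - ⟪ls, B ys⟫) := by
        rw [inner_neg_left, ContinuousLinearMap.adjoint_inner_left, map_sub, inner_sub_right]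
      rw [e]; linarith
    have h := hgS ys y' (-((ContinuousLinearMap.adjoint B) ls)) hv
    have e : ⟪-((ContinuousLinearMap.adjoint B) ls), y' - ys⟫
        = -(⟪ls, B y'⟫ - ⟪ls, B ys⟫) := by
      rw [inner_neg_left, ContinuousLinearMap.adjoint_inner_left, map_sub, inner_sub_right]
    rw [e] at h
    linarith
  -- definitions
  set W : ℕ → ℝ := fun k => ((f (x k) + ⟪ls, A (x k)⟫) - (f xs + ⟪ls, A xs⟫))
      + ((g (y k) + ⟪ls, B (y k)⟫) - (g ys + ⟪ls, B ys⟫)) with hWdef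
  have hWnn : ∀ k, 0 ≤ W k := by
    intro k
    have h1 := hWx (x k)
    have h2 := hWy (y k)
    have h3 : 0 ≤ μf/2 * ‖x k - xs‖^2 := by positivity
    have h4 : 0 ≤ μg/2 * ‖y k - ys‖^2 := by positivity
    simp only [hWdef]
    linarith
  have hWlb : ∀ k, μf/2 * ‖x k - xs‖^2 + μg/2 * ‖y k - ys‖^2 ≤ W k := by
    intro k
    have h1 := hWx (x k)
    have h2 := hWy (y k)
    simp only [hWdef]
    linarith
  set E : ℕ → ℝ := fun k => δ^2*(β k)*(W k)
      + 1/2*‖(δ • Zs k + (1 - δ*γ) • x k) - xs‖^2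
      + 1/2*‖(δ • Hs k + (1 - δ*γ) • y k) - ys‖^2
      + δ*(1/2*‖lam k - ls‖^2)
      + ((δ*γ-1) + δ^2*(β k)*(μf + ε k))/2 * ‖x k - xs‖^2
      + ((δ*γ-1) + δ^2*(β k)*(μg + ε k))/2 * ‖y k - ys‖^2 with hEdef
  set Dn : ℕ → ℝ := fun k => (β k)*δ^2*(μf/2)*‖x (k+1) - x k‖^2
      + (β k)*δ^2*(μg/2)*‖y (k+1) - y k‖^2 with hDdef
  set θn : ℕ → ℝ := fun k => α k * β k * ε k with hθdef
  set c0 : ℝ := δ^2/2*‖xs‖^2 + δ^2/2*‖ys‖^2 with hc0def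
  clear_value W E Dn θn c0
  have hc0nn : 0 ≤ c0 := by rw [hc0def]; positivity
  have hcx : ∀ k, 1 ≤ k → 0 ≤ ((δ*γ-1) + δ^2*(β k)*(μf + ε k))/2 := by
    intro k hk
    have := mul_nonneg (mul_nonneg (sq_nonneg δ) (hβpos k hk).le) (add_nonneg hμf (hεnn k hk))
    linarith
  have hcy : ∀ k, 1 ≤ k → 0 ≤ ((δ*γ-1) + δ^2*(β k)*(μg + ε k))/2 := by
    intro k hk
    have := mul_nonneg (mul_nonneg (sq_nonneg δ) (hβpos k hk).le) (add_nonneg hμg (hεnn k hk))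
    linarith
  have hEnn : ∀ k, 1 ≤ k → 0 ≤ E k := by
    intro k hk
    have h1 : 0 ≤ δ^2*(β k)*(W k) :=
      mul_nonneg (mul_nonneg (sq_nonneg δ) (hβpos k hk).le) (hWnn k)
    have h2 := mul_nonneg (hcx k hk) (sq_nonneg ‖x k - xs‖)
    have h3 := mul_nonneg (hcy k hk) (sq_nonneg ‖y k - ys‖)
    have h4 : 0 ≤ δ*(1/2*‖lam k - ls‖^2) := by positivity
    have h5 : 0 ≤ 1/2*‖(δ • Zs k + (1 - δ*γ) • x k) - xs‖^2 := by positivity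
    have h6 : 0 ≤ 1/2*‖(δ • Hs k + (1 - δ*γ) • y k) - ys‖^2 := by positivity
    simp only [hEdef]
    linarith
  -- the master one-step estimate
  have master : ∀ k, 1 ≤ k → E (k+1) ≤ E k + θn k * (c0 + E (k+1)) - Dn k := by
    intro k hk
    have hk1 : 1 ≤ k + 1 := by omega
    obtain ⟨u, v, hu, hv, hux, hvy⟩ := hstep k hk
    -- x block
    have h1x : (f (x (k+1)) + ⟪ls, A (x (k+1))⟫) - (f (x k) + ⟪ls, A (x k)⟫)
        + μf/2 * ‖x (k+1) - x k‖^2 ≤ ⟪u + (ContinuousLinearMap.adjoint A) ls, x (k+1) - x k⟫ := by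
      have ha1 := hfS (x (k+1)) (x k) u hu
      have e : ⟪u + (ContinuousLinearMap.adjoint A) ls, x (k+1) - x k⟫
          = ⟪u, x (k+1) - x k⟫ + (⟪ls, A (x (k+1))⟫ - ⟪ls, A (x k)⟫) := by
        rw [inner_add_left, ContinuousLinearMap.adjoint_inner_left, map_sub, inner_sub_right,
          inner_sub_right]
      have e2 : ⟪u, x k - x (k+1)⟫ = -⟪u, x (k+1) - x k⟫ := by
        rw [show x k - x (k+1) = -(x (k+1) - x k) from by abel, inner_neg_right]
      have e3 : ‖x k - x (k+1)‖ = ‖x (k+1) - x k‖ := norm_sub_rev _ _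
      rw [e2, e3] at ha1
      rw [e]
      linarith
    have h2x : (f (x (k+1)) + ⟪ls, A (x (k+1))⟫) - (f xs + ⟪ls, A xs⟫)
        + μf/2 * ‖x (k+1) - xs‖^2 ≤ ⟪u + (ContinuousLinearMap.adjoint A) ls, x (k+1) - xs⟫ := by
      have ha1 := hfS (x (k+1)) xs u hu
      have e : ⟪u + (ContinuousLinearMap.adjoint A) ls, x (k+1) - xs⟫
          = ⟪u, x (k+1) - xs⟫ + (⟪ls, A (x (k+1))⟫ - ⟪ls, A xs⟫) := by
        rw [inner_add_left, ContinuousLinearMap.adjoint_inner_left, map_sub, inner_sub_right,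
          inner_sub_right]
      have e2 : ⟪u, xs - x (k+1)⟫ = -⟪u, x (k+1) - xs⟫ := by
        rw [show xs - x (k+1) = -(x (k+1) - xs) from by abel, inner_neg_right]
      have e3 : ‖xs - x (k+1)‖ = ‖x (k+1) - xs‖ := norm_sub_rev _ _
      rw [e2, e3] at ha1
      rw [e]
      linarith
    have hstx : (1 / α k) • (Zs (k+1) - Zs k) =
        -(β k • ((u + (ContinuousLinearMap.adjoint A) ls)
          + (ContinuousLinearMap.adjoint A) (lam (k+1) - ls) + ε k • x (k+1)
          - μf • (x (k+1) - (δ • Zs (k+1) + (1 - δ*γ) • x (k+1))))) := by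
      rw [hux, hZd k hk, map_sub]
      module
    have Bx := block_est (α k) (β k) (β (k+1)) δ γ μf (ε k) (ε (k+1))
      (hα k hk) (hβpos k hk) hδ hδγ hμf (hεnn k hk) (hεnn (k+1) hk1)
      (hββ k hk) (hεmono k hk)
      (x k) (x (k+1)) xs (Zs k) (Zs (k+1))
      (u + (ContinuousLinearMap.adjoint A) ls)
      ((ContinuousLinearMap.adjoint A) (lam (k+1) - ls))
      (f (x k) + ⟪ls, A (x k)⟫) (f (x (k+1)) + ⟪ls, A (x (k+1))⟫) (f xs + ⟪ls, A xs⟫)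
      (hZ k hk) hstx h1x h2x
    -- y block
    have h1y : (g (y (k+1)) + ⟪ls, B (y (k+1))⟫) - (g (y k) + ⟪ls, B (y k)⟫)
        + μg/2 * ‖y (k+1) - y k‖^2 ≤ ⟪v + (ContinuousLinearMap.adjoint B) ls, y (k+1) - y k⟫ := by
      have ha1 := hgS (y (k+1)) (y k) v hv
      have e : ⟪v + (ContinuousLinearMap.adjoint B) ls, y (k+1) - y k⟫
          = ⟪v, y (k+1) - y k⟫ + (⟪ls, B (y (k+1))⟫ - ⟪ls, B (y k)⟫) := by
        rw [inner_add_left, ContinuousLinearMap.adjoint_inner_left, map_sub, inner_sub_right,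
          inner_sub_right]
      have e2 : ⟪v, y k - y (k+1)⟫ = -⟪v, y (k+1) - y k⟫ := by
        rw [show y k - y (k+1) = -(y (k+1) - y k) from by abel, inner_neg_right]
      have e3 : ‖y k - y (k+1)‖ = ‖y (k+1) - y k‖ := norm_sub_rev _ _
      rw [e2, e3] at ha1
      rw [e]
      linarith
    have h2y : (g (y (k+1)) + ⟪ls, B (y (k+1))⟫) - (g ys + ⟪ls, B ys⟫)
        + μg/2 * ‖y (k+1) - ys‖^2 ≤ ⟪v + (ContinuousLinearMap.adjoint B) ls, y (k+1) - ys⟫ := by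
      have ha1 := hgS (y (k+1)) ys v hv
      have e : ⟪v + (ContinuousLinearMap.adjoint B) ls, y (k+1) - ys⟫
          = ⟪v, y (k+1) - ys⟫ + (⟪ls, B (y (k+1))⟫ - ⟪ls, B ys⟫) := by
        rw [inner_add_left, ContinuousLinearMap.adjoint_inner_left, map_sub, inner_sub_right,
          inner_sub_right]
      have e2 : ⟪v, ys - y (k+1)⟫ = -⟪v, y (k+1) - ys⟫ := by
        rw [show ys - y (k+1) = -(y (k+1) - ys) from by abel, inner_neg_right]
      have e3 : ‖ys - y (k+1)‖ = ‖y (k+1) - ys‖ := norm_sub_rev _ _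
      rw [e2, e3] at ha1
      rw [e]
      linarith
    have hsty : (1 / α k) • (Hs (k+1) - Hs k) =
        -(β k • ((v + (ContinuousLinearMap.adjoint B) ls)
          + (ContinuousLinearMap.adjoint B) (lam (k+1) - ls) + ε k • y (k+1)
          - μg • (y (k+1) - (δ • Hs (k+1) + (1 - δ*γ) • y (k+1))))) := by
      rw [hvy, hHd k hk, map_sub]
      module
    have By := block_est (α k) (β k) (β (k+1)) δ γ μg (ε k) (ε (k+1))
      (hα k hk) (hβpos k hk) hδ hδγ hμg (hεnn k hk) (hεnn (k+1) hk1)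
      (hββ k hk) (hεmono k hk)
      (y k) (y (k+1)) ys (Hs k) (Hs (k+1))
      (v + (ContinuousLinearMap.adjoint B) ls)
      ((ContinuousLinearMap.adjoint B) (lam (k+1) - ls))
      (g (y k) + ⟪ls, B (y k)⟫) (g (y (k+1)) + ⟪ls, B (y (k+1))⟫) (g ys + ⟪ls, B ys⟫)
      (hH k hk) hsty h1y h2y
    -- cross term
    have hlam' : lam (k+1) - lam k = (α k * β k) •
        (A (δ • Zs (k+1) + (1 - δ*γ) • x (k+1)) + B (δ • Hs (k+1) + (1 - δ*γ) • y (k+1)) - b) := by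
      rw [hlam k hk, hZd k hk, hHd k hk]; abel
    have hcross : α k * β k * δ *
        (⟪(ContinuousLinearMap.adjoint A) (lam (k+1) - ls), (δ • Zs (k+1) + (1 - δ*γ) • x (k+1)) - xs⟫
         + ⟪(ContinuousLinearMap.adjoint B) (lam (k+1) - ls), (δ • Hs (k+1) + (1 - δ*γ) • y (k+1)) - ys⟫)
        = δ * (1/2*‖lam (k+1) - ls‖^2 - 1/2*‖lam k - ls‖^2 + 1/2*‖lam (k+1) - lam k‖^2) := by
      have hPBQ : A ((δ • Zs (k+1) + (1 - δ*γ) • x (k+1)) - xs)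
          + B ((δ • Hs (k+1) + (1 - δ*γ) • y (k+1)) - ys)
          = A (δ • Zs (k+1) + (1 - δ*γ) • x (k+1)) + B (δ • Hs (k+1) + (1 - δ*γ) • y (k+1)) - b := by
        rw [map_sub, map_sub, ← hb]; abel
      have c1 : ⟪(ContinuousLinearMap.adjoint A) (lam (k+1) - ls), (δ • Zs (k+1) + (1 - δ*γ) • x (k+1)) - xs⟫
          + ⟪(ContinuousLinearMap.adjoint B) (lam (k+1) - ls), (δ • Hs (k+1) + (1 - δ*γ) • y (k+1)) - ys⟫
          = ⟪lam (k+1) - ls, A (δ • Zs (k+1) + (1 - δ*γ) • x (k+1)) + B (δ • Hs (k+1) + (1 - δ*γ) • y (k+1)) - b⟫ := by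
        rw [ContinuousLinearMap.adjoint_inner_left, ContinuousLinearMap.adjoint_inner_left,
          ← inner_add_right, hPBQ]
      have c2 : ⟪lam (k+1) - ls, lam (k+1) - lam k⟫
          = (α k * β k) * ⟪lam (k+1) - ls, A (δ • Zs (k+1) + (1 - δ*γ) • x (k+1)) + B (δ • Hs (k+1) + (1 - δ*γ) • y (k+1)) - b⟫ := by
        rw [hlam', real_inner_smul_right]
      have c3 : ⟪lam (k+1) - ls, lam (k+1) - lam k⟫
          = 1/2*‖lam (k+1) - ls‖^2 - 1/2*‖lam k - ls‖^2 + 1/2*‖lam (k+1) - lam k‖^2 := by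
        rw [real_inner_comm]
        exact half_sq (lam (k+1)) (lam k) ls
      rw [c1]
      linear_combination δ * (c2.symm.trans c3)
    -- W telescoping
    have hWtel : δ^2*(β (k+1))*(W (k+1)) - δ^2*(β k)*(W k)
        - (β k)*δ^2*(W (k+1) - W k) - (α k * β k)*δ*(W (k+1)) ≤ 0 := by
      have h1 := mul_le_mul_of_nonneg_right (hββ k hk) (mul_nonneg hδ.le (hWnn (k+1)))
      ring_nf at h1 ⊢
      linarith only [h1]
    -- E (k+1) lower bound for absorption
    have hEp : 1/2*‖(δ • Zs (k+1) + (1 - δ*γ) • x (k+1)) - xs‖^2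
        + 1/2*‖(δ • Hs (k+1) + (1 - δ*γ) • y (k+1)) - ys‖^2 ≤ E (k+1) := by
      have h1 : 0 ≤ δ^2*(β (k+1))*(W (k+1)) :=
        mul_nonneg (mul_nonneg (sq_nonneg δ) (hβpos (k+1) hk1).le) (hWnn (k+1))
      have h2 := mul_nonneg (hcx (k+1) hk1) (sq_nonneg ‖x (k+1) - xs‖)
      have h3 := mul_nonneg (hcy (k+1) hk1) (sq_nonneg ‖y (k+1) - ys‖)
      have h4 : 0 ≤ δ*(1/2*‖lam (k+1) - ls‖^2) := by positivity
      simp only [hEdef]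
      linarith
    have hθnn : 0 ≤ α k * β k * ε k :=
      mul_nonneg (mul_nonneg (hα k hk).le (hβpos k hk).le) (hεnn k hk)
    have hEp2 := mul_le_mul_of_nonneg_left hEp hθnn
    -- nonnegative remainder terms
    have nn1 : 0 ≤ δ * (1/2*‖lam (k+1) - lam k‖^2) := by positivity
    have nn2 : 0 ≤ (β k)*δ^2*(ε k/2)*‖x (k+1) - x k‖^2 :=
      mul_nonneg (mul_nonneg (mul_nonneg (hβpos k hk).le (sq_nonneg δ))
        (by linarith [hεnn k hk])) (sq_nonneg _)
    have nn3 : 0 ≤ (β k)*δ^2*(ε k/2)*‖y (k+1) - y k‖^2 :=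
      mul_nonneg (mul_nonneg (mul_nonneg (hβpos k hk).le (sq_nonneg δ))
        (by linarith [hεnn k hk])) (sq_nonneg _)
    simp only [hEdef, hDdef, hθdef, hc0def, hWdef] at hWtel hEp2 ⊢
    ring_nf at Bx By hcross hWtel hEp2 nn1 nn2 nn3 ⊢
    linarith only [Bx, By, hcross, hWtel, hEp2, nn1, nn2, nn3]
  -- apply the Gronwall lemma to the shifted sequences
  have hstep1 : ∀ k, E ((k+1)+1) ≤ E (k+1) + θn (k+1) * (c0 + E ((k+1)+1)) - Dn (k+1) :=
    fun k => master (k+1) (by omega)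
  have hE1 : ∀ k, 0 ≤ E (k+1) := fun k => hEnn (k+1) (by omega)
  have hθ1 : ∀ k, 0 ≤ θn (k+1) := by
    intro k
    have hk1 : 1 ≤ k + 1 := by omega
    rw [hθdef]
    exact mul_nonneg (mul_nonneg (hα _ hk1).le (hβpos _ hk1).le) (hεnn _ hk1)
  have hD1 : ∀ k, 0 ≤ Dn (k+1) := by
    intro k
    have hk1 : 1 ≤ k + 1 := by omega
    have h1 : 0 ≤ (β (k+1))*δ^2*(μf/2)*‖x (k+2) - x (k+1)‖^2 :=
      mul_nonneg (mul_nonneg (mul_nonneg (hβpos _ hk1).le (sq_nonneg δ)) (by linarith)) (sq_nonneg _)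
    have h2 : 0 ≤ (β (k+1))*δ^2*(μg/2)*‖y (k+2) - y (k+1)‖^2 :=
      mul_nonneg (mul_nonneg (mul_nonneg (hβpos _ hk1).le (sq_nonneg δ)) (by linarith)) (sq_nonneg _)
    simp only [hDdef]
    exact add_nonneg h1 h2
  have hsum1 : Summable (fun k => θn (k+1)) := by
    have := (summable_nat_add_iff 1).2 hsum
    simpa [hθdef] using this
  obtain ⟨⟨M, hM⟩, hDtend1⟩ := gronwall_est (fun k => E (k+1)) (fun k => θn (k+1))
    (fun k => Dn (k+1)) c0 hc0nn hE1 hθ1 hD1 hsum1 hstep1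
  have hDtend : Tendsto Dn atTop (𝓝 0) := by
    rwa [tendsto_add_atTop_iff_nat 1] at hDtend1
  constructor
  · -- boundedness conclusion
    refine ⟨max 1 (2*M/δ^2), lt_of_lt_of_le one_pos (le_max_left _ _), ?_⟩
    intro k hk
    have hEk : E k ≤ M := by
      obtain ⟨n, rfl⟩ : ∃ n, k = n + 1 := ⟨k - 1, by omega⟩
      exact hM n
    have h1 : δ^2*(β k)*(W k) ≤ E k := by
      have h2 := mul_nonneg (hcx k hk) (sq_nonneg ‖x k - xs‖)
      have h3 := mul_nonneg (hcy k hk) (sq_nonneg ‖y k - ys‖)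
      have h4 : 0 ≤ δ*(1/2*‖lam k - ls‖^2) := by positivity
      have h5 : 0 ≤ 1/2*‖(δ • Zs k + (1 - δ*γ) • x k) - xs‖^2 := by positivity
      have h6 : 0 ≤ 1/2*‖(δ • Hs k + (1 - δ*γ) • y k) - ys‖^2 := by positivity
      simp only [hEdef]
      linarith
    have h7 := mul_le_mul_of_nonneg_left (hWlb k)
      (mul_nonneg (sq_nonneg δ) (hβpos k hk).le)
    rw [le_div_iff₀ (hβpos k hk)]
    have h8 : (μf * ‖x k - xs‖^2 + μg * ‖y k - ys‖^2) * β k ≤ 2*M/δ^2 := by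
      rw [le_div_iff₀ (by positivity : (0:ℝ) < δ^2)]
      nlinarith [h7, h1, hEk]
    exact le_trans h8 (le_max_right _ _)
  constructor
  · -- μf βk ‖x(k+1)-x k‖² → 0
    have hg : Tendsto (fun k => 2/δ^2 * Dn k) atTop (𝓝 0) := by
      have := hDtend.const_mul (2/δ^2)
      simpa using this
    apply squeeze_zero' (g := fun k => 2/δ^2 * Dn k)
    · filter_upwards [eventually_ge_atTop 1] with k hk
      exact mul_nonneg (mul_nonneg hμf (hβpos k hk).le) (sq_nonneg _)
    · filter_upwards [eventually_ge_atTop 1] with k hk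
      have he : 2/δ^2 * ((β k)*δ^2*(μf/2)*‖x (k+1) - x k‖^2 + (β k)*δ^2*(μg/2)*‖y (k+1) - y k‖^2)
          = μf * β k * ‖x (k+1) - x k‖^2 + μg * β k * ‖y (k+1) - y k‖^2 := by
        field_simp
      have h2 : 0 ≤ μg * β k * ‖y (k+1) - y k‖^2 :=
        mul_nonneg (mul_nonneg hμg (hβpos k hk).le) (sq_nonneg _)
      simp only [hDdef]
      rw [he]
      linarith
    · exact hg
  · -- μg βk ‖y(k+1)-y k‖² → 0
    have hg : Tendsto (fun k => 2/δ^2 * Dn k) atTop (𝓝 0) := by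
      have := hDtend.const_mul (2/δ^2)
      simpa using this
    apply squeeze_zero' (g := fun k => 2/δ^2 * Dn k)
    · filter_upwards [eventually_ge_atTop 1] with k hk
      exact mul_nonneg (mul_nonneg hμg (hβpos k hk).le) (sq_nonneg _)
    · filter_upwards [eventually_ge_atTop 1] with k hk
      have he : 2/δ^2 * ((β k)*δ^2*(μf/2)*‖x (k+1) - x k‖^2 + (β k)*δ^2*(μg/2)*‖y (k+1) - y k‖^2)
          = μf * β k * ‖x (k+1) - x k‖^2 + μg * β k * ‖y (k+1) - y k‖^2 := by
        field_simp
      have h1 : 0 ≤ μf * β k * ‖x (k+1) - x k‖^2 :=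
        mul_nonneg (mul_nonneg hμf (hβpos k hk).le) (sq_nonneg _)
      simp only [hDdef]
      rw [he]
      linarith
    · exact hg
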